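/- The Stieltjes measure μ associated to the Minkowski question mark function (i.e. μ([0,x]) = ?(x)) is invariant under the Gauss map G(x) = 1/x mod 1. -/

import Mathlib

open MeasureTheory Set

/-- The Gauss map `x ↦ 1/x mod 1` (with `0 ↦ 0`). -/
noncomputable def gaussMap (x : ℝ) : ℝ := if x = 0 then 0 else Int.fract x⁻¹

/-- The `(k+1)`-st continued fraction partial quotient `a_{k+1}(x)`. -/
noncomputable def cfDigit (k : ℕ) (x : ℝ) : ℕ := ⌊(gaussMap^[k] x)⁻¹⌋₊

/-- `cfSum n x = a_1(x) + ⋯ + a_n(x)`. -/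
noncomputable def cfSum (n : ℕ) (x : ℝ) : ℕ := ∑ i ∈ Finset.range n, cfDigit i x

/-- Minkowski's question mark function, defined by Salem's series
`?(x) = Σ_{k≥1} (-1)^{k-1} 2^{1-(a_1+⋯+a_k)}`, which is a finite sum for rational `x`
(the terms are cut off once the Gauss-map orbit reaches `0`). -/
noncomputable def mink (x : ℝ) : ℝ :=
  ∑' k : ℕ, if gaussMap^[k] x = 0 then 0 else
    (-1 : ℝ) ^ k * (2 : ℝ) ^ ((1 : ℤ) - (cfSum (k + 1) x : ℤ))

/-! ### Auxiliary definitions and lemmas -/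

noncomputable def minkTerm (x : ℝ) (k : ℕ) : ℝ :=
  if gaussMap^[k] x = 0 then 0 else
    (-1 : ℝ) ^ k * (2 : ℝ) ^ ((1 : ℤ) - (cfSum (k + 1) x : ℤ))

lemma mink_eq_tsum (x : ℝ) : mink x = ∑' k, minkTerm x k := rfl

lemma gaussMap_zero : gaussMap 0 = 0 := by simp [gaussMap]

lemma gaussMap_mem (x : ℝ) : gaussMap x ∈ Ico (0 : ℝ) 1 := by
  unfold gaussMap
  split
  · exact ⟨le_refl 0, one_pos⟩
  · exact ⟨Int.fract_nonneg _, Int.fract_lt_one _⟩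

lemma iterate_mem (x : ℝ) (hx : x ∈ Icc (0 : ℝ) 1) (k : ℕ) :
    gaussMap^[k] x ∈ Icc (0 : ℝ) 1 := by
  induction k with
  | zero => exact hx
  | succ n ih =>
    rw [Function.iterate_succ_apply']
    exact Ico_subset_Icc_self (gaussMap_mem _)

lemma iterate_zero_eq (k : ℕ) : gaussMap^[k] (0 : ℝ) = 0 :=
  Function.iterate_fixed gaussMap_zero k

lemma iterate_ne_zero_of_le {x : ℝ} {k i : ℕ} (hik : i ≤ k)
    (h : gaussMap^[k] x ≠ 0) : gaussMap^[i] x ≠ 0 := by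
  intro h0
  apply h
  obtain ⟨j, rfl⟩ := Nat.exists_eq_add_of_le hik
  rw [Nat.add_comm, Function.iterate_add_apply, h0, iterate_zero_eq]

lemma cfDigit_pos {x : ℝ} (hx : x ∈ Icc (0 : ℝ) 1) {i : ℕ}
    (h : gaussMap^[i] x ≠ 0) : 1 ≤ cfDigit i x := by
  have hz := iterate_mem x hx i
  have hzpos : 0 < gaussMap^[i] x := lt_of_le_of_ne hz.1 (Ne.symm h)
  have : (1 : ℝ) ≤ (gaussMap^[i] x)⁻¹ := one_le_inv_iff₀.2 ⟨hzpos, hz.2⟩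
  exact Nat.le_floor (by exact_mod_cast this)

lemma cfSum_lower' {x : ℝ} (hx : x ∈ Icc (0 : ℝ) 1) {k : ℕ}
    (h : gaussMap^[k] x ≠ 0) : cfSum 1 x + k ≤ cfSum (k + 1) x := by
  unfold cfSum
  rw [Finset.sum_range_succ' (fun i => cfDigit i x) k, Finset.sum_range_one]
  have hk : k ≤ ∑ i ∈ Finset.range k, cfDigit (i + 1) x := by
    calc k = ∑ _i ∈ Finset.range k, 1 := by simp
    _ ≤ ∑ i ∈ Finset.range k, cfDigit (i + 1) x := by
        apply Finset.sum_le_sum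
        intro i hi
        exact cfDigit_pos hx
          (iterate_ne_zero_of_le (Nat.succ_le_of_lt (Finset.mem_range.1 hi)) h)
  omega

lemma cfSum_lower {x : ℝ} (hx : x ∈ Icc (0 : ℝ) 1) {k : ℕ}
    (h : gaussMap^[k] x ≠ 0) : k + 1 ≤ cfSum (k + 1) x := by
  have h0 : 1 ≤ cfSum 1 x := by
    have := cfDigit_pos hx (iterate_ne_zero_of_le (Nat.zero_le k) h)
    simpa [cfSum] using this
  have := cfSum_lower' hx h
  omega

lemma two_zpow_neg (k : ℕ) : (2 : ℝ) ^ (-(k : ℤ)) = (1 / 2 : ℝ) ^ k := by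
  rw [zpow_neg, zpow_natCast, one_div, inv_pow]

lemma abs_minkTerm_le {x : ℝ} (hx : x ∈ Icc (0 : ℝ) 1) (k : ℕ) :
    |minkTerm x k| ≤ (1 / 2 : ℝ) ^ k := by
  unfold minkTerm
  split
  · rw [abs_zero]; positivity
  · rename_i h
    rw [abs_mul, abs_pow, abs_neg, abs_one, one_pow, one_mul]
    have hS : (k : ℤ) + 1 ≤ (cfSum (k + 1) x : ℤ) := by
      exact_mod_cast cfSum_lower hx h
    have h1 : ((1 : ℤ) - (cfSum (k + 1) x : ℤ)) ≤ -(k : ℤ) := by omega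
    have h2 : |(2 : ℝ) ^ ((1 : ℤ) - (cfSum (k + 1) x : ℤ))| =
        (2 : ℝ) ^ ((1 : ℤ) - (cfSum (k + 1) x : ℤ)) := abs_of_nonneg (by positivity)
    rw [h2]
    calc (2 : ℝ) ^ ((1 : ℤ) - (cfSum (k + 1) x : ℤ)) ≤ (2 : ℝ) ^ (-(k : ℤ)) :=
          zpow_le_zpow_right₀ one_le_two h1
    _ = (1 / 2 : ℝ) ^ k := two_zpow_neg k

lemma summable_minkTerm {x : ℝ} (hx : x ∈ Icc (0 : ℝ) 1) :
    Summable (minkTerm x) := by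
  apply Summable.of_abs
  apply Summable.of_nonneg_of_le (fun k => abs_nonneg _) (abs_minkTerm_le hx)
  exact summable_geometric_of_lt_one (by norm_num) (by norm_num)

lemma abs_minkTerm_succ_le {x : ℝ} (hx : x ∈ Icc (0 : ℝ) 1) (k : ℕ) :
    |minkTerm x (k + 1)| ≤ minkTerm x 0 * (1 / 2 : ℝ) ^ (k + 1) := by
  have h0 : 0 ≤ minkTerm x 0 := by
    unfold minkTerm
    split
    · exact le_refl 0
    · have : (0:ℝ) ≤ (2 : ℝ) ^ ((1 : ℤ) - (cfSum (0 + 1) x : ℤ)) := by positivity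
      simpa using this
  by_cases h : gaussMap^[k + 1] x = 0
  · rw [show minkTerm x (k + 1) = 0 by simp [minkTerm, h]]
    rw [abs_zero]
    exact mul_nonneg h0 (by positivity)
  · have hx0 : gaussMap^[0] x ≠ 0 := iterate_ne_zero_of_le (Nat.zero_le _) h
    have ht0 : minkTerm x 0 = (2 : ℝ) ^ ((1 : ℤ) - (cfSum 1 x : ℤ)) := by
      unfold minkTerm
      rw [if_neg hx0]
      norm_num
    have hS : (cfSum 1 x : ℤ) + (k + 1 : ℕ) ≤ (cfSum (k + 1 + 1) x : ℤ) := by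
      exact_mod_cast cfSum_lower' hx h
    have hlhs : minkTerm x (k + 1) =
        (-1 : ℝ) ^ (k + 1) * (2 : ℝ) ^ ((1 : ℤ) - (cfSum (k + 1 + 1) x : ℤ)) := by
      unfold minkTerm
      rw [if_neg h]
    rw [hlhs, abs_mul, abs_pow, abs_neg, abs_one, one_pow, one_mul]
    rw [abs_of_nonneg (by positivity : (0:ℝ) ≤ (2 : ℝ) ^ ((1 : ℤ) - (cfSum (k + 1 + 1) x : ℤ)))]
    rw [ht0]
    calc (2 : ℝ) ^ ((1 : ℤ) - (cfSum (k + 1 + 1) x : ℤ))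
        ≤ (2 : ℝ) ^ ((1 : ℤ) - (cfSum 1 x : ℤ) + (-(k + 1 : ℕ) : ℤ)) := by
          apply zpow_le_zpow_right₀ one_le_two
          push_cast at hS ⊢
          omega
    _ = (2 : ℝ) ^ ((1 : ℤ) - (cfSum 1 x : ℤ)) * (2:ℝ) ^ (-(k + 1 : ℕ) : ℤ) := by
          rw [zpow_add₀ (by norm_num : (2:ℝ) ≠ 0)]
    _ = (2 : ℝ) ^ ((1 : ℤ) - (cfSum 1 x : ℤ)) * (1 / 2 : ℝ) ^ (k + 1) := by
          congr 1
          exact_mod_cast two_zpow_neg (k + 1)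

lemma minkTerm_zero_le_one {x : ℝ} (hx : x ∈ Icc (0 : ℝ) 1) :
    minkTerm x 0 ≤ 1 := by
  unfold minkTerm
  split
  · norm_num
  · rename_i h
    have h1 : 1 ≤ cfSum 1 x := by
      have := cfDigit_pos hx h
      simpa [cfSum] using this
    rw [pow_zero, one_mul]
    calc (2 : ℝ) ^ ((1 : ℤ) - (cfSum 1 x : ℤ)) ≤ (2 : ℝ) ^ (0 : ℤ) := by
          apply zpow_le_zpow_right₀ one_le_two
          have : (1 : ℤ) ≤ (cfSum 1 x : ℤ) := by exact_mod_cast h1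
          omega
    _ = 1 := by norm_num

lemma mink_nonneg {x : ℝ} (hx : x ∈ Icc (0 : ℝ) 1) : 0 ≤ mink x := by
  have hsummable := summable_minkTerm hx
  have hsum : Summable fun k => minkTerm x (k + 1) :=
    (summable_nat_add_iff 1).2 hsummable
  have hsumabs : Summable fun k => |minkTerm x (k + 1)| := hsum.abs
  have hgeo : Summable fun k : ℕ => (1 / 2 : ℝ) ^ k :=
    summable_geometric_of_lt_one (by norm_num) (by norm_num)
  have hgeo1 : Summable fun k : ℕ => (1 / 2 : ℝ) ^ (k + 1) :=
    (summable_nat_add_iff 1).2 hgeo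
  have hgeo2 : Summable fun k : ℕ => minkTerm x 0 * (1 / 2 : ℝ) ^ (k + 1) :=
    hgeo1.mul_left _
  have e1 : |∑' k, minkTerm x (k + 1)| ≤ ∑' k, |minkTerm x (k + 1)| := by
    simpa only [Real.norm_eq_abs] using
      norm_tsum_le_tsum_norm (f := fun k => minkTerm x (k + 1))
        (by simpa only [Real.norm_eq_abs] using hsumabs)
  have e2 : ∑' k, |minkTerm x (k + 1)| ≤ ∑' k : ℕ, minkTerm x 0 * (1 / 2 : ℝ) ^ (k + 1) :=
    Summable.tsum_le_tsum (fun k => abs_minkTerm_succ_le hx k) hsumabs hgeo2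
  have e3 : ∑' k : ℕ, minkTerm x 0 * (1 / 2 : ℝ) ^ (k + 1) = minkTerm x 0 := by
    rw [tsum_mul_left]
    have h4 : ∑' k : ℕ, (1 / 2 : ℝ) ^ (k + 1) = 1 := by
      have h2 : ∑' k : ℕ, (1 / 2 : ℝ) ^ k = 2 := by
        rw [tsum_geometric_of_lt_one (by norm_num) (by norm_num)]; norm_num
      have h3 := Summable.tsum_eq_zero_add hgeo
      rw [h2] at h3
      norm_num at h3
      linarith
    rw [h4, mul_one]
  have habs : |∑' k, minkTerm x (k + 1)| ≤ minkTerm x 0 :=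
    le_trans e1 (le_trans e2 (le_of_eq e3))
  rw [mink_eq_tsum, Summable.tsum_eq_zero_add hsummable]
  have := (abs_le.1 habs).1
  linarith

lemma mink_le_two {x : ℝ} (hx : x ∈ Icc (0 : ℝ) 1) : mink x ≤ 2 := by
  rw [mink_eq_tsum]
  calc ∑' k, minkTerm x k ≤ ∑' k, |minkTerm x k| := by
        apply Summable.tsum_le_tsum (fun k => le_abs_self _) (summable_minkTerm hx)
        exact (summable_minkTerm hx).abs
  _ ≤ ∑' k : ℕ, (1 / 2 : ℝ) ^ k := by
        apply Summable.tsum_le_tsum (abs_minkTerm_le hx) (summable_minkTerm hx).abs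
        exact summable_geometric_of_lt_one (by norm_num) (by norm_num)
  _ = 2 := by rw [tsum_geometric_of_lt_one (by norm_num) (by norm_num)]; norm_num

lemma mink_zero : mink 0 = 0 := by
  rw [mink_eq_tsum]
  have : ∀ k, minkTerm 0 k = 0 := by
    intro k
    simp [minkTerm, iterate_zero_eq k]
  simp [this]

section FunEq

variable {n : ℕ} {x : ℝ}

lemma gaussMap_inv_add (hn : 1 ≤ n) (hx : x ∈ Ico (0 : ℝ) 1) :
    gaussMap ((n + x : ℝ)⁻¹) = x := by
  have hpos : (0 : ℝ) < n + x := by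
    have : (1 : ℝ) ≤ (n : ℝ) := by exact_mod_cast hn
    linarith [hx.1]
  unfold gaussMap
  rw [if_neg (by positivity), inv_inv]
  rw [add_comm, Int.fract_add_natCast, Int.fract_eq_self.2 ⟨hx.1, hx.2⟩]

lemma iterate_inv_add (hn : 1 ≤ n) (hx : x ∈ Ico (0 : ℝ) 1) (k : ℕ) :
    gaussMap^[k + 1] ((n + x : ℝ)⁻¹) = gaussMap^[k] x := by
  rw [Function.iterate_succ_apply, gaussMap_inv_add hn hx]

lemma cfDigit_zero_inv_add (hn : 1 ≤ n) (hx : x ∈ Ico (0 : ℝ) 1) :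
    cfDigit 0 ((n + x : ℝ)⁻¹) = n := by
  have hpos : (0 : ℝ) < n + x := by
    have : (1 : ℝ) ≤ (n : ℝ) := by exact_mod_cast hn
    linarith [hx.1]
  unfold cfDigit
  simp only [Function.iterate_zero_apply, inv_inv]
  rw [Nat.floor_eq_iff (le_of_lt hpos)]
  constructor
  · linarith [hx.1]
  · linarith [hx.2]

lemma cfSum_inv_add (hn : 1 ≤ n) (hx : x ∈ Ico (0 : ℝ) 1) (m : ℕ) :
    cfSum (m + 1) ((n + x : ℝ)⁻¹) = n + cfSum m x := by
  unfold cfSum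
  rw [Finset.sum_range_succ']
  have h1 : ∀ i, cfDigit (i + 1) ((n + x : ℝ)⁻¹) = cfDigit i x := by
    intro i
    unfold cfDigit
    rw [iterate_inv_add hn hx]
  simp only [h1, cfDigit_zero_inv_add hn hx]
  ring

lemma mink_funEq (hn : 1 ≤ n) (hx : x ∈ Ico (0 : ℝ) 1) :
    mink ((n + x : ℝ)⁻¹) = (2 : ℝ) ^ ((1 : ℤ) - (n : ℤ)) -
      (2 : ℝ) ^ (-(n : ℤ)) * mink x := by
  have hpos : (0 : ℝ) < n + x := by
    have : (1 : ℝ) ≤ (n : ℝ) := by exact_mod_cast hn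
    linarith [hx.1]
  have hy1 : (n + x : ℝ)⁻¹ ≤ 1 := by
    rw [inv_le_one_iff₀]
    right
    have : (1 : ℝ) ≤ (n : ℝ) := by exact_mod_cast hn
    linarith [hx.1]
  have hy : (n + x : ℝ)⁻¹ ∈ Icc (0 : ℝ) 1 := ⟨le_of_lt (by positivity), hy1⟩
  have hterm0 : minkTerm ((n + x : ℝ)⁻¹) 0 = (2 : ℝ) ^ ((1 : ℤ) - (n : ℤ)) := by
    unfold minkTerm
    rw [if_neg (by simpa using (by positivity : (0:ℝ) < (n + x : ℝ)⁻¹).ne')]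
    rw [pow_zero, one_mul]
    congr 1
    have : cfSum 1 ((n + x : ℝ)⁻¹) = n := by
      have := cfSum_inv_add hn hx 0
      simpa [cfSum] using this
    rw [this]
  have htermsucc : ∀ k, minkTerm ((n + x : ℝ)⁻¹) (k + 1) =
      -(2 : ℝ) ^ (-(n : ℤ)) * minkTerm x k := by
    intro k
    unfold minkTerm
    rw [iterate_inv_add hn hx]
    split
    · simp
    · rename_i h
      rw [cfSum_inv_add hn hx (k + 1)]
      have : ((1 : ℤ) - ((n + cfSum (k + 1) x : ℕ) : ℤ)) =
          (-(n : ℤ)) + ((1 : ℤ) - (cfSum (k + 1) x : ℤ)) := by push_cast; ring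
      rw [this, zpow_add₀ (by norm_num : (2:ℝ) ≠ 0), pow_succ]
      ring
  rw [mink_eq_tsum, Summable.tsum_eq_zero_add (summable_minkTerm hy), hterm0]
  have : (fun k => minkTerm ((n + x : ℝ)⁻¹) (k + 1)) =
      (fun k => -(2 : ℝ) ^ (-(n : ℤ)) * minkTerm x k) := funext htermsucc
  rw [this, tsum_mul_left, mink_eq_tsum]
  ring

end FunEq

lemma measurable_gaussMap : Measurable gaussMap := by
  unfold gaussMap
  exact Measurable.ite (measurableSet_eq) measurable_const
    (measurable_fract.comp measurable_inv)

section MeasurePart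

variable {μ : Measure ℝ} [IsProbabilityMeasure μ]

lemma meas_Ioc_add (hdist : ∀ x ∈ Icc (0 : ℝ) 1, μ (Icc 0 x) = ENNReal.ofReal (mink x))
    {a b : ℝ} (h0 : 0 ≤ a) (hab : a ≤ b) (hb1 : b ≤ 1) :
    μ (Icc 0 a) + μ (Ioc a b) = μ (Icc 0 b) := by
  rw [← measure_union (by
      rw [Set.disjoint_left]
      intro z hz1 hz2
      exact absurd hz1.2 (not_le.2 hz2.1)) measurableSet_Ioc]
  rw [Icc_union_Ioc_eq_Icc h0 hab]

lemma meas_Ioc_eq (hdist : ∀ x ∈ Icc (0 : ℝ) 1, μ (Icc 0 x) = ENNReal.ofReal (mink x))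
    {a b : ℝ} (h0 : 0 ≤ a) (hab : a ≤ b) (hb1 : b ≤ 1) :
    μ (Ioc a b) = ENNReal.ofReal (mink b - mink a) := by
  have h := meas_Ioc_add hdist h0 hab hb1
  rw [hdist a ⟨h0, hab.trans hb1⟩, hdist b ⟨h0.trans hab, hb1⟩] at h
  rw [ENNReal.ofReal_sub _ (mink_nonneg ⟨h0, hab.trans hb1⟩)]
  exact ENNReal.eq_sub_of_add_eq ENNReal.ofReal_ne_top (by rw [add_comm]; exact h)

lemma mink_mono (hdist : ∀ x ∈ Icc (0 : ℝ) 1, μ (Icc 0 x) = ENNReal.ofReal (mink x))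
    {a b : ℝ} (h0 : 0 ≤ a) (hab : a ≤ b) (hb1 : b ≤ 1) :
    mink a ≤ mink b := by
  have h : μ (Icc (0 : ℝ) a) ≤ μ (Icc (0 : ℝ) b) :=
    measure_mono (Icc_subset_Icc le_rfl hab)
  rw [hdist a ⟨h0, hab.trans hb1⟩, hdist b ⟨h0.trans hab, hb1⟩] at h
  exact (ENNReal.ofReal_le_ofReal_iff (mink_nonneg ⟨h0.trans hab, hb1⟩)).1 h

lemma meas_singleton (hdist : ∀ x ∈ Icc (0 : ℝ) 1, μ (Icc 0 x) = ENNReal.ofReal (mink x))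
    {y : ℝ} (hy : y ∈ Ioc (0 : ℝ) 1) : μ {y} = 0 := by
  obtain ⟨hy0, hy1⟩ := hy
  have hyinv1 : 1 ≤ y⁻¹ := one_le_inv_iff₀.2 ⟨hy0, hy1⟩
  have hyinv0 : (0 : ℝ) ≤ y⁻¹ := zero_le_one.trans hyinv1
  set n : ℕ := ⌊y⁻¹⌋₊ with hn
  have hn1 : 1 ≤ n := Nat.le_floor (by exact_mod_cast hyinv1)
  have hn1R : (1 : ℝ) ≤ (n : ℝ) := by exact_mod_cast hn1
  set x : ℝ := Int.fract y⁻¹ with hxdef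
  have hx : x ∈ Ico (0 : ℝ) 1 := ⟨Int.fract_nonneg _, Int.fract_lt_one _⟩
  have hxy : (n : ℝ) + x = y⁻¹ := by
    have hfl : ((⌊y⁻¹⌋₊ : ℤ) : ℝ) = ((⌊y⁻¹⌋ : ℤ) : ℝ) := by
      exact_mod_cast congrArg (fun z : ℤ => (z : ℝ)) (Int.natCast_floor_eq_floor hyinv0)
    have := Int.floor_add_fract y⁻¹
    rw [hxdef, hn]
    push_cast at hfl ⊢
    linarith [hfl, this]
  have hyx : y = ((n : ℝ) + x)⁻¹ := by rw [hxy, inv_inv]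
  set c : ℕ → ℝ := fun k => x + (1 - x) / (k + 2) with hc
  have hcgt : ∀ k, x < c k := by
    intro k
    have : (0 : ℝ) < (1 - x) / (k + 2) := by
      apply div_pos (by linarith [hx.2]) (by positivity)
    simp only [hc]
    linarith
  have hclt : ∀ k, c k < 1 := by
    intro k
    have h2 : (2 : ℝ) ≤ (k : ℝ) + 2 := by
      have : (0 : ℝ) ≤ (k : ℝ) := Nat.cast_nonneg k
      linarith
    have : (1 - x) / (k + 2) ≤ (1 - x) / 2 := by
      apply div_le_div_of_nonneg_left (by linarith [hx.2]) (by norm_num) h2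
    simp only [hc]
    nlinarith [hx.2, hx.1]
  have hcanti : Antitone c := by
    intro i j hij
    simp only [hc]
    have : (1 - x) / ((j : ℝ) + 2) ≤ (1 - x) / ((i : ℝ) + 2) := by
      apply div_le_div_of_nonneg_left (by linarith [hx.2]) (by positivity)
      exact_mod_cast by omega
    linarith
  have key : ∀ k, μ {y} ≤ μ (Ioc x (c k)) := by
    intro k
    have hck : c k ∈ Ico (0 : ℝ) 1 := ⟨le_of_lt (lt_of_le_of_lt hx.1 (hcgt k)), hclt k⟩
    have hpos : (0 : ℝ) < (n : ℝ) + x := by linarith [hx.1]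
    have hpos' : (0 : ℝ) < (n : ℝ) + c k := by linarith [hck.1]
    have hak : ((n : ℝ) + c k)⁻¹ < y := by
      rw [hyx]
      gcongr
      exact hcgt k
    have h1 : μ {y} ≤ μ (Ioc (((n : ℝ) + c k)⁻¹) y) :=
      measure_mono (singleton_subset_iff.2 ⟨hak, le_rfl⟩)
    have hmy : mink y = (2 : ℝ) ^ ((1 : ℤ) - (n : ℤ)) - (2 : ℝ) ^ (-(n : ℤ)) * mink x := by
      rw [hyx]; exact mink_funEq hn1 hx
    have hma : mink (((n : ℝ) + c k)⁻¹) =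
        (2 : ℝ) ^ ((1 : ℤ) - (n : ℤ)) - (2 : ℝ) ^ (-(n : ℤ)) * mink (c k) :=
      mink_funEq hn1 hck
    have hd : mink x ≤ mink (c k) := mink_mono hdist hx.1 (le_of_lt (hcgt k)) (le_of_lt (hclt k))
    have h2 : μ (Ioc (((n : ℝ) + c k)⁻¹) y) = ENNReal.ofReal (mink y - mink (((n : ℝ) + c k)⁻¹)) := by
      apply meas_Ioc_eq hdist (le_of_lt (by positivity)) (le_of_lt hak) hy1
    have h3 : μ (Ioc x (c k)) = ENNReal.ofReal (mink (c k) - mink x) :=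
      meas_Ioc_eq hdist hx.1 (le_of_lt (hcgt k)) (le_of_lt (hclt k))
    rw [h3]
    refine le_trans h1 ?_
    rw [h2]
    apply ENNReal.ofReal_le_ofReal
    rw [hmy, hma]
    have htwo : (2 : ℝ) ^ (-(n : ℤ)) ≤ 1 := by
      calc (2 : ℝ) ^ (-(n : ℤ)) ≤ (2 : ℝ) ^ (0 : ℤ) :=
        zpow_le_zpow_right₀ one_le_two (by omega)
      _ = 1 := by norm_num
    have htwo' : (0 : ℝ) < (2 : ℝ) ^ (-(n : ℤ)) := by positivity
    nlinarith
  have hiInter : (⋂ k, Ioc x (c k)) = ∅ := by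
    ext z
    simp only [mem_iInter, mem_Ioc, mem_empty_iff_false, iff_false]
    intro hz
    have hz0 := (hz 0).1
    obtain ⟨k, hk⟩ := exists_nat_gt ((1 - x) / (z - x))
    have hzk := (hz k).2
    have h1 : (1 - x) / ((k : ℝ) + 2) < z - x := by
      rw [div_lt_iff₀ (by positivity)]
      have h2 : (1 - x) / (z - x) < (k : ℝ) + 2 := by
        have : (0 : ℝ) ≤ k := Nat.cast_nonneg k
        linarith
      calc (1 - x) = (1 - x) / (z - x) * (z - x) :=
            (div_mul_cancel₀ _ (by linarith : z - x ≠ 0)).symm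
      _ < ((k : ℝ) + 2) * (z - x) := by
            apply mul_lt_mul_of_pos_right h2 (by linarith)
      _ = (z - x) * ((k : ℝ) + 2) := by ring
    simp only [hc] at hzk
    linarith
  have hlim : Filter.Tendsto (fun k => μ (Ioc x (c k))) Filter.atTop (nhds 0) := by
    have := MeasureTheory.tendsto_measure_iInter_atTop
      (s := fun k => Ioc x (c k))
      (fun k => measurableSet_Ioc.nullMeasurableSet)
      (fun i j hij => Ioc_subset_Ioc le_rfl (hcanti hij))
      ⟨0, measure_ne_top μ _⟩
    rw [hiInter, measure_empty] at this
    exact this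
  exact le_antisymm (ge_of_tendsto' hlim key) (by simp)

end MeasurePart

/-- The Minkowski–Stieltjes measure `μ` (the probability measure on `[0,1]` with
distribution function `?`) is invariant under the Gauss map. -/
theorem minkMeasure_gauss_invariant (μ : Measure ℝ) [IsProbabilityMeasure μ]
    (hdist : ∀ x ∈ Icc (0 : ℝ) 1, μ (Icc 0 x) = ENNReal.ofReal (mink x))
    (hsupp : μ (Icc (0 : ℝ) 1) = 1) :
    Measure.map gaussMap μ = μ := by
  have hout : μ (Icc (0 : ℝ) 1)ᶜ = 0 := by
    have h := measure_compl (μ := μ) (s := Icc (0:ℝ) 1) measurableSet_Icc (measure_ne_top μ _)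
    rw [hsupp, measure_univ] at h
    simpa using h
  have h0 : μ {(0 : ℝ)} = 0 := by
    have h := hdist 0 ⟨le_rfl, zero_le_one⟩
    rw [Icc_self, mink_zero, ENNReal.ofReal_zero] at h
    exact h
  haveI : IsProbabilityMeasure (Measure.map gaussMap μ) :=
    Measure.isProbabilityMeasure_map measurable_gaussMap.aemeasurable
  apply Measure.ext_of_Iic
  intro t
  rw [Measure.map_apply measurable_gaussMap measurableSet_Iic]
  rcases lt_or_ge t 0 with ht | ht
  · have h1 : gaussMap ⁻¹' Iic t = ∅ := by
      ext y
      simp only [mem_preimage, mem_Iic, mem_empty_iff_false, iff_false, not_le]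
      exact lt_of_lt_of_le ht (gaussMap_mem y).1
    rw [h1, measure_empty]
    symm
    apply measure_mono_null _ hout
    intro z hz
    simp only [mem_Iic] at hz
    simp only [mem_compl_iff, mem_Icc, not_and, not_le]
    intro hz0
    linarith
  rcases le_or_gt 1 t with ht1 | ht1
  · have h1 : gaussMap ⁻¹' Iic t = univ :=
      eq_univ_of_forall fun y => le_trans (le_of_lt (gaussMap_mem y).2) ht1
    rw [h1, measure_univ]
    symm
    apply le_antisymm prob_le_one
    calc (1 : ENNReal) = μ (Icc 0 1) := hsupp.symm
    _ ≤ μ (Iic t) := measure_mono fun z hz => le_trans hz.2 ht1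
  -- main case: 0 ≤ t < 1
  have htmem : t ∈ Ico (0 : ℝ) 1 := ⟨ht, ht1⟩
  set a : ℕ → ℝ := fun n => ((n : ℝ) + 1 + t)⁻¹ with ha
  set b : ℕ → ℝ := fun n => ((n : ℝ) + 1)⁻¹ with hb
  have hbpos : ∀ n : ℕ, (0 : ℝ) < (n : ℝ) + 1 := fun n => by positivity
  have hNpos : ∀ n : ℕ, (0 : ℝ) < (n : ℝ) + 1 + t := fun n => by
    have := hbpos n; linarith
  have hapos : ∀ n : ℕ, 0 < a n := fun n => by
    simp only [ha]; exact inv_pos.2 (hNpos n)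
  have hageb : ∀ n : ℕ, a n ≤ b n := fun n => by
    simp only [ha, hb]
    exact inv_anti₀ (hbpos n) (by linarith)
  have hble : ∀ n : ℕ, b n ≤ 1 := fun n => by
    simp only [hb]
    rw [inv_le_one_iff₀]
    right
    have : (0 : ℝ) ≤ (n : ℝ) := Nat.cast_nonneg n
    linarith
  have hfract : ∀ (y : ℝ) (m : ℕ), 0 < y → ((m : ℝ) + 1) ≤ y⁻¹ →
      y⁻¹ - ((m : ℝ) + 1) < 1 → gaussMap y = y⁻¹ - ((m : ℝ) + 1) := by
    intro y m hy0 hle hlt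
    unfold gaussMap
    rw [if_neg (ne_of_gt hy0)]
    rw [Int.fract_eq_iff]
    refine ⟨by linarith, hlt, ⟨(m : ℤ) + 1, by push_cast; ring⟩⟩
  have hset : gaussMap ⁻¹' Iic t ∩ Icc 0 1 = {0} ∪ ⋃ n : ℕ, Icc (a n) (b n) := by
    ext y
    simp only [mem_inter_iff, mem_preimage, mem_Iic, mem_Icc, mem_union,
      mem_singleton_iff, mem_iUnion]
    constructor
    · rintro ⟨hgy, hy0, hy1⟩
      rcases eq_or_lt_of_le hy0 with hy0' | hy0'
      · exact Or.inl hy0'.symm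
      right
      have hyinv1 : 1 ≤ y⁻¹ := one_le_inv_iff₀.2 ⟨hy0', hy1⟩
      have hyinv0 : (0 : ℝ) ≤ y⁻¹ := zero_le_one.trans hyinv1
      have hN1 : 1 ≤ ⌊y⁻¹⌋₊ := Nat.le_floor (by exact_mod_cast hyinv1)
      obtain ⟨m, hm⟩ : ∃ m, ⌊y⁻¹⌋₊ = m + 1 := ⟨⌊y⁻¹⌋₊ - 1, by omega⟩
      have hfl : ((m : ℝ) + 1) ≤ y⁻¹ := by
        have h2 := Nat.floor_le hyinv0
        rw [hm] at h2
        push_cast at h2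
        linarith
      have hfu : y⁻¹ < (m : ℝ) + 2 := by
        have h2 := Nat.lt_floor_add_one y⁻¹
        rw [hm] at h2
        push_cast at h2
        linarith
      have hfr : gaussMap y = y⁻¹ - ((m : ℝ) + 1) :=
        hfract y m hy0' hfl (by linarith)
      rw [hfr] at hgy
      refine ⟨m, ?_, ?_⟩
      · simp only [ha]
        have h3 : y⁻¹ ≤ (m : ℝ) + 1 + t := by linarith
        calc ((m : ℝ) + 1 + t)⁻¹ ≤ (y⁻¹)⁻¹ :=
              inv_anti₀ (inv_pos.2 hy0') h3
        _ = y := inv_inv y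
      · simp only [hb]
        calc y = (y⁻¹)⁻¹ := (inv_inv y).symm
        _ ≤ ((m : ℝ) + 1)⁻¹ := inv_anti₀ (hbpos m) hfl
    · rintro (rfl | ⟨m, hm1, hm2⟩)
      · refine ⟨by rw [gaussMap_zero]; exact ht, le_rfl, zero_le_one⟩
      · have hy0' : 0 < y := lt_of_lt_of_le (hapos m) hm1
        have hy1 : y ≤ 1 := le_trans hm2 (hble m)
        have hinvl : ((m : ℝ) + 1) ≤ y⁻¹ := by
          simp only [hb] at hm2
          calc ((m : ℝ) + 1) = (((m : ℝ) + 1)⁻¹)⁻¹ := (inv_inv _).symm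
          _ ≤ y⁻¹ := inv_anti₀ hy0' hm2
        have hinvu : y⁻¹ ≤ (m : ℝ) + 1 + t := by
          simp only [ha] at hm1
          calc y⁻¹ ≤ (((m : ℝ) + 1 + t)⁻¹)⁻¹ :=
                inv_anti₀ (inv_pos.2 (hNpos m)) hm1
          _ = (m : ℝ) + 1 + t := inv_inv _
        have hfr : gaussMap y = y⁻¹ - ((m : ℝ) + 1) :=
          hfract y m hy0' hinvl (by linarith)
        exact ⟨by rw [hfr]; linarith, le_of_lt hy0', hy1⟩
  have hsplit : μ (gaussMap ⁻¹' Iic t) = μ (⋃ n : ℕ, Icc (a n) (b n)) := by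
    have h2 := measure_inter_add_diff (μ := μ) (t := Icc (0:ℝ) 1) (gaussMap ⁻¹' Iic t)
      measurableSet_Icc
    have h3 : μ (gaussMap ⁻¹' Iic t \ Icc 0 1) = 0 :=
      measure_mono_null (fun z hz => hz.2) hout
    have h1 : μ (gaussMap ⁻¹' Iic t) = μ (gaussMap ⁻¹' Iic t ∩ Icc 0 1) := by
      rw [← h2, h3, add_zero]
    rw [h1, hset]
    refine le_antisymm ?_ (measure_mono subset_union_right)
    calc μ ({(0:ℝ)} ∪ ⋃ n : ℕ, Icc (a n) (b n))
        ≤ μ {(0:ℝ)} + μ (⋃ n : ℕ, Icc (a n) (b n)) := measure_union_le _ _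
    _ = μ (⋃ n : ℕ, Icc (a n) (b n)) := by rw [h0, zero_add]
  have hblt : ∀ m n : ℕ, m < n → b n < a m := by
    intro m n hmn
    have h1 : (m : ℝ) + 1 ≤ (n : ℝ) := by exact_mod_cast hmn
    simp only [ha, hb]
    exact inv_strictAnti₀ (hNpos m) (by linarith [htmem.2])
  have hdisjoint : Pairwise (Function.onFun Disjoint fun n => Icc (a n) (b n)) := by
    have hd : ∀ m n : ℕ, m < n → Disjoint (Icc (a m) (b m)) (Icc (a n) (b n)) := by
      intro m n hmn
      rw [Set.disjoint_left]
      intro z hz1 hz2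
      have := hblt m n hmn
      have h1 : z ≤ b n := hz2.2
      have h2 : a m ≤ z := hz1.1
      linarith
    intro m n hmn
    rcases hmn.lt_or_gt with h | h
    · exact hd m n h
    · exact (hd n m h).symm
  have hunion : μ (⋃ n, Icc (a n) (b n)) = ∑' n, μ (Icc (a n) (b n)) :=
    measure_iUnion hdisjoint (fun n => measurableSet_Icc)
  have hIcc : ∀ n, μ (Icc (a n) (b n)) = μ (Ioc (a n) (b n)) := by
    intro n
    refine le_antisymm ?_ (measure_mono Ioc_subset_Icc_self)
    calc μ (Icc (a n) (b n)) ≤ μ ({a n} ∪ Ioc (a n) (b n)) := by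
          apply measure_mono
          intro z hz
          rcases eq_or_lt_of_le hz.1 with h | h
          · exact Or.inl h.symm
          · exact Or.inr ⟨h, hz.2⟩
    _ ≤ μ {a n} + μ (Ioc (a n) (b n)) := measure_union_le _ _
    _ = μ (Ioc (a n) (b n)) := by
          rw [meas_singleton hdist ⟨hapos n, le_trans (hageb n) (hble n)⟩, zero_add]
  have hIoc : ∀ n, μ (Ioc (a n) (b n)) =
      ENNReal.ofReal ((1 / 2 : ℝ) ^ (n + 1) * mink t) := by
    intro n
    rw [meas_Ioc_eq hdist (le_of_lt (hapos n)) (hageb n) (hble n)]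
    congr 1
    have hcast : (((n + 1 : ℕ) : ℝ)) = (n : ℝ) + 1 := by push_cast; ring
    have hfa : mink (a n) = (2 : ℝ) ^ ((1 : ℤ) - ((n + 1 : ℕ) : ℤ)) -
        (2 : ℝ) ^ (-((n + 1 : ℕ) : ℤ)) * mink t := by
      have h := mink_funEq (n := n + 1) (x := t) (Nat.le_add_left 1 n) htmem
      rw [hcast] at h
      simp only [ha]
      exact h
    have hfb : mink (b n) = (2 : ℝ) ^ ((1 : ℤ) - ((n + 1 : ℕ) : ℤ)) := by
      have h := mink_funEq (n := n + 1) (x := 0) (Nat.le_add_left 1 n)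
        ⟨le_rfl, zero_lt_one⟩
      rw [mink_zero, mul_zero, sub_zero, hcast, add_zero] at h
      simp only [hb]
      exact h
    rw [hfa, hfb, ← two_zpow_neg (n + 1)]
    push_cast
    ring
  have htsum : ∑' n : ℕ, ENNReal.ofReal ((1 / 2 : ℝ) ^ (n + 1) * mink t)
      = ENNReal.ofReal (mink t) := by
    have hterm : ∀ n : ℕ, ENNReal.ofReal ((1 / 2 : ℝ) ^ (n + 1) * mink t)
        = (2⁻¹ : ENNReal) ^ (n + 1) * ENNReal.ofReal (mink t) := by
      intro n
      rw [ENNReal.ofReal_mul (by positivity), ENNReal.ofReal_pow (by norm_num)]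
      congr 2
      norm_num [ENNReal.ofReal_div_of_pos]
    simp only [hterm]
    rw [ENNReal.tsum_mul_right]
    have hgeom : ∑' n : ℕ, (2⁻¹ : ENNReal) ^ (n + 1) = 1 := by
      have h1 : ∑' n : ℕ, (2⁻¹ : ENNReal) ^ (n + 1)
          = 2⁻¹ * ∑' n : ℕ, (2⁻¹ : ENNReal) ^ n := by
        rw [← ENNReal.tsum_mul_left]
        congr 1
        funext n
        rw [pow_succ]
        ring
      rw [h1, ENNReal.tsum_geometric, ENNReal.one_sub_inv_two, inv_inv]
      exact ENNReal.inv_mul_cancel two_ne_zero ENNReal.ofNat_ne_top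
    rw [hgeom, one_mul]
  have hrhs : μ (Iic t) = ENNReal.ofReal (mink t) := by
    have h1 : μ (Iic t) = μ (Icc 0 t) := by
      refine le_antisymm ?_ (measure_mono Icc_subset_Iic_self)
      calc μ (Iic t) ≤ μ (Icc 0 t ∪ (Icc (0:ℝ) 1)ᶜ) := by
            apply measure_mono
            intro z hz
            simp only [mem_Iic] at hz
            rcases le_or_gt 0 z with h | h
            · exact Or.inl ⟨h, hz⟩
            · refine Or.inr ?_
              simp only [mem_compl_iff, mem_Icc, not_and, not_le]
              intro h2
              linarith
      _ ≤ μ (Icc 0 t) + μ (Icc (0:ℝ) 1)ᶜ := measure_union_le _ _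
      _ = μ (Icc 0 t) := by rw [hout, add_zero]
    rw [h1, hdist t ⟨ht, le_of_lt ht1⟩]
  rw [hsplit, hunion]
  simp only [hIcc, hIoc]
  rw [htsum, hrhs]
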